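/- Let Ω be an n×n complex matrix. A complex number μ is an eigenvalue of the linear endomorphism ad_Ω of the space of n×n complex matrices if and only if μ = λ₁ − λ₂ for some eigenvalues λ₁, λ₂ of Ω. (In particular, if Ω has eigenvalues λ₁,…,λ_n, then ad_Ω has eigenvalues λ_j − λ_k.) -/

import Mathlib

open Polynomial Matrix

private lemma eval_charpoly_aux {n : ℕ} (M : Matrix (Fin n) (Fin n) ℂ) (k : ℂ) :
    M.charpoly.eval k = (Matrix.scalar (Fin n) k - M).det := by
  rw [Matrix.charpoly, ← Polynomial.coe_evalRingHom, RingHom.map_det]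
  congr 1
  ext i j
  rw [RingHom.mapMatrix_apply, Matrix.map_apply]
  by_cases h : i = j
  · subst h
    simp [charmatrix_apply_eq, Matrix.scalar_apply, Matrix.one_apply]
  · simp [charmatrix_apply_ne _ _ _ h, Matrix.scalar_apply, Matrix.one_apply, h,
      Matrix.diagonal_apply_ne _ h]

private lemma isRoot_charpoly_iff_mem_spectrum {n : ℕ} (M : Matrix (Fin n) (Fin n) ℂ) (k : ℂ) :
    M.charpoly.IsRoot k ↔ k ∈ spectrum ℂ M := by
  rw [spectrum.mem_iff, Polynomial.IsRoot, eval_charpoly_aux]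
  have halg : (algebraMap ℂ (Matrix (Fin n) (Fin n) ℂ)) k = Matrix.scalar (Fin n) k := rfl
  rw [halg]
  constructor
  · intro h hu
    rw [Matrix.isUnit_iff_isUnit_det, isUnit_iff_ne_zero] at hu
    exact hu h
  · intro h
    by_contra hd
    exact h ((Matrix.isUnit_iff_isUnit_det _).mpr (isUnit_iff_ne_zero.mpr hd))

theorem ad_hasEigenvalue_iff {n : ℕ} (Ω : Matrix (Fin n) (Fin n) ℂ) (μ : ℂ) :
    Module.End.HasEigenvalue
      ((LinearMap.mulLeft ℂ Ω - LinearMap.mulRight ℂ Ω :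
        Matrix (Fin n) (Fin n) ℂ →ₗ[ℂ] Matrix (Fin n) (Fin n) ℂ)) μ ↔
    ∃ lam₁ lam₂ : ℂ, Ω.charpoly.IsRoot lam₁ ∧ Ω.charpoly.IsRoot lam₂ ∧ μ = lam₁ - lam₂ := by
  rcases Nat.eq_zero_or_pos n with hn | hn
  · subst hn
    constructor
    · intro h
      obtain ⟨x, hx⟩ := h.exists_hasEigenvector
      exact absurd (Subsingleton.elim x 0) hx.2
    · rintro ⟨l1, l2, h1, _, _⟩
      rw [isRoot_charpoly_iff_mem_spectrum, spectrum.mem_iff] at h1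
      exact absurd (isUnit_of_subsingleton _) h1
  constructor
  · intro h
    obtain ⟨x, hmem, hx⟩ := h.exists_hasEigenvector
    rw [Module.End.mem_eigenspace_iff] at hmem
    have hx' : Ω * x - x * Ω = μ • x := by
      simpa [LinearMap.sub_apply, LinearMap.mulLeft_apply, LinearMap.mulRight_apply] using hmem
    set B : Matrix (Fin n) (Fin n) ℂ := Ω + algebraMap ℂ _ μ with hB
    have hΩx : Ω * x = μ • x + x * Ω := sub_eq_iff_eq_add.mp hx'
    have hxB : x * B = Ω * x := by
      rw [hB, mul_add, Algebra.algebraMap_eq_smul_one, mul_smul_comm, mul_one, hΩx, add_comm]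
    -- powers commute through x
    have hpow : ∀ k : ℕ, Ω ^ k * x = x * B ^ k := by
      intro k
      induction k with
      | zero => simp
      | succ k ih =>
        rw [pow_succ', mul_assoc, ih, pow_succ', ← mul_assoc, ← mul_assoc, hxB]
    have haeval : ∀ q : ℂ[X], (aeval Ω q) * x = x * aeval B q := by
      intro q
      rw [Polynomial.aeval_eq_sum_range, Polynomial.aeval_eq_sum_range,
        Finset.sum_mul, Finset.mul_sum]
      exact Finset.sum_congr rfl fun i _ => by
        rw [smul_mul_assoc, mul_smul_comm, hpow i]
    have hzero : x * aeval B Ω.charpoly = 0 := by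
      rw [← haeval, Matrix.aeval_self_charpoly, zero_mul]
    have hnotunit : ¬IsUnit (aeval B Ω.charpoly) := by
      rintro ⟨u, hu⟩
      apply hx
      calc x = x * aeval B Ω.charpoly * ↑u⁻¹ := by rw [← hu, Units.mul_inv_cancel_right]
        _ = 0 := by rw [hzero, zero_mul]
    have hdeg : 0 < Ω.charpoly.degree := by
      rw [Matrix.charpoly_degree_eq_dim]
      simpa [Fintype.card_fin] using hn
    have hspec : (0 : ℂ) ∈ spectrum ℂ (aeval B Ω.charpoly) := (spectrum.zero_mem_iff (R := ℂ)).mpr hnotunit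
    rw [spectrum.map_polynomial_aeval_of_degree_pos B Ω.charpoly hdeg] at hspec
    obtain ⟨ν, hν, hν0⟩ := hspec
    have hν2 : ν - μ ∈ spectrum ℂ Ω := by
      rw [spectrum.mem_iff] at hν ⊢
      intro hu
      apply hν
      convert hu using 1
      rw [hB, map_sub]
      abel
    exact ⟨ν, ν - μ, hν0, (isRoot_charpoly_iff_mem_spectrum Ω _).mpr hν2, by ring⟩
  · rintro ⟨l1, l2, h1, h2, rfl⟩
    rw [isRoot_charpoly_iff_mem_spectrum, spectrum.mem_iff] at h1 h2
    rw [Matrix.isUnit_iff_isUnit_det, isUnit_iff_ne_zero, not_ne_iff] at h1 h2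
    obtain ⟨v, hv, hv0⟩ := (Matrix.exists_mulVec_eq_zero_iff).mpr h1
    obtain ⟨w, hw, hw0⟩ := (Matrix.exists_vecMul_eq_zero_iff).mpr h2
    have hΩv : Ω *ᵥ v = l1 • v := by
      have h' : (algebraMap ℂ (Matrix (Fin n) (Fin n) ℂ) l1) *ᵥ v - Ω *ᵥ v = 0 := by
        rw [← Matrix.sub_mulVec]; exact hv0
      have hsc : (algebraMap ℂ (Matrix (Fin n) (Fin n) ℂ) l1) *ᵥ v = l1 • v := by
        rw [Algebra.algebraMap_eq_smul_one, Matrix.smul_mulVec, Matrix.one_mulVec]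
      rw [hsc, sub_eq_zero] at h'
      exact h'.symm
    have hwΩ : w ᵥ* Ω = l2 • w := by
      have h' : w ᵥ* (algebraMap ℂ (Matrix (Fin n) (Fin n) ℂ) l2) - w ᵥ* Ω = 0 := by
        rw [← Matrix.vecMul_sub]; exact hw0
      have hsc : w ᵥ* (algebraMap ℂ (Matrix (Fin n) (Fin n) ℂ) l2) = l2 • w := by
        ext j
        simp [Algebra.algebraMap_eq_smul_one, Matrix.vecMul, dotProduct,
          Matrix.one_apply, mul_comm]
      rw [hsc, sub_eq_zero] at h'
      exact h'.symm
    set X : Matrix (Fin n) (Fin n) ℂ := Matrix.vecMulVec v w with hX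
    have hXne : X ≠ 0 := by
      obtain ⟨i, hi⟩ := Function.ne_iff.mp hv
      obtain ⟨j, hj⟩ := Function.ne_iff.mp hw
      intro h0
      have : X i j = 0 := by rw [h0]; rfl
      rw [hX, Matrix.vecMulVec_apply] at this
      exact (mul_ne_zero (by simpa using hi) (by simpa using hj)) this
    have hmul1 : Ω * X = l1 • X := by
      ext i j
      simp only [hX, Matrix.mul_apply, Matrix.vecMulVec_apply, Matrix.smul_apply, smul_eq_mul]
      calc ∑ k, Ω i k * (v k * w j) = (∑ k, Ω i k * v k) * w j := by
            rw [Finset.sum_mul]; exact Finset.sum_congr rfl fun k _ => (mul_assoc _ _ _).symm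
        _ = (Ω *ᵥ v) i * w j := rfl
        _ = l1 * (v i * w j) := by rw [hΩv]; simp [mul_assoc]
    have hmul2 : X * Ω = l2 • X := by
      ext i j
      simp only [hX, Matrix.mul_apply, Matrix.vecMulVec_apply, Matrix.smul_apply, smul_eq_mul]
      calc ∑ k, v i * w k * Ω k j = v i * ∑ k, w k * Ω k j := by
            rw [Finset.mul_sum]; exact Finset.sum_congr rfl fun k _ => mul_assoc _ _ _
        _ = v i * (w ᵥ* Ω) j := rfl
        _ = l2 * (v i * w j) := by rw [hwΩ]; simp only [Pi.smul_apply, smul_eq_mul]; ring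
    apply Module.End.hasEigenvalue_of_hasEigenvector (x := X)
    refine ⟨Module.End.mem_eigenspace_iff.mpr ?_, hXne⟩
    simp only [LinearMap.sub_apply, LinearMap.mulLeft_apply, LinearMap.mulRight_apply,
      hmul1, hmul2, sub_smul]
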